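/- Let A be a commutative unital complex Banach algebra, let (φ_n)_{n∈ℕ} be a sequence of pairwise distinct characters on A such that the closure in the character space of A (with the Gelfand topology) of the set {φ_1, φ_2, …} has no perfect subsets, and let (λ_n)_{n∈ℕ} be a sequence of complex numbers with ∑_{n=1}^∞ |λ_n| < ∞. If for every a ∈ A one has ∑_{n=1}^∞ λ_n φ_n(a) = 0, then λ_n = 0 for all n. -/

import Mathlib

open WeakDual

section Aux

variable {A : Type*} [NormedCommRing A] [NormedAlgebra ℂ A] [CompleteSpace A]

private lemma char_eval_continuous (b : A) :
    Continuous fun χ : characterSpace ℂ A => χ b :=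
  (WeakDual.eval_continuous b).comp continuous_subtype_val

private lemma char_norm_apply_le (χ : characterSpace ℂ A) (a : A) :
    ‖χ a‖ ≤ ‖a‖ * ‖(1 : A)‖ :=
  spectrum.norm_le_norm_mul_of_mem (WeakDual.CharacterSpace.apply_mem_spectrum χ a)

private lemma exists_sep (χ₀ ψ : characterSpace ℂ A) (h : ψ ≠ χ₀) :
    ∃ c : A, χ₀ c = 1 ∧ ψ c = 0 := by
  have hx : ∃ x : A, ψ x ≠ χ₀ x := by
    by_contra h'
    push_neg at h'
    exact h (DFunLike.ext _ _ h')
  obtain ⟨x, hx⟩ := hx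
  refine ⟨(χ₀ x - ψ x)⁻¹ • (x - algebraMap ℂ A (ψ x)), ?_, ?_⟩
  · rw [map_smul, map_sub, AlgHomClass.commutes, smul_eq_mul]
    have hne : χ₀ x - ψ x ≠ 0 := sub_ne_zero.mpr (Ne.symm hx)
    field_simp
    simp
  · rw [map_smul, map_sub, AlgHomClass.commutes]
    simp

private lemma interp (χ₀ : characterSpace ℂ A) (T : Finset (characterSpace ℂ A))
    (hT : χ₀ ∉ T) : ∃ c : A, χ₀ c = 1 ∧ ∀ ψ ∈ T, ψ c = 0 := by
  have hne : ∀ ψ : T, (ψ : characterSpace ℂ A) ≠ χ₀ := by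
    rintro ⟨ψ, hψ⟩ rfl
    exact hT hψ
  choose c hc1 hc0 using fun ψ : T => exists_sep χ₀ ψ (hne ψ)
  refine ⟨∏ ψ ∈ T.attach, c ψ, ?_, ?_⟩
  · rw [map_prod]
    exact Finset.prod_eq_one fun ψ _ => hc1 ψ
  · intro ψ hψ
    rw [map_prod]
    exact Finset.prod_eq_zero (Finset.mem_attach _ ⟨ψ, hψ⟩) (hc0 ⟨ψ, hψ⟩)

/-- `Good χ₀ K` : some element of the algebra has value `1` at `χ₀` and values of norm
at most `1/2` at every character of `K`. -/
private def Good (χ₀ : characterSpace ℂ A) (K : Set (characterSpace ℂ A)) : Prop :=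
  ∃ b : A, χ₀ b = 1 ∧ ∀ χ ∈ K, ‖χ b‖ ≤ 1/2

/-- The derived set of any set in a T1 space is closed. -/
private lemma isClosed_acc {X : Type*} [TopologicalSpace X] [T1Space X] (K : Set X) :
    IsClosed {x : X | AccPt x (Filter.principal K)} := by
  rw [← isOpen_compl_iff, isOpen_iff_mem_nhds]
  intro x hx
  rw [Set.mem_compl_iff, Set.mem_setOf_eq, accPt_iff_nhds] at hx
  push_neg at hx
  obtain ⟨U, hU, hUK⟩ := hx
  obtain ⟨V, hVU, hVo, hxV⟩ := mem_nhds_iff.mp hU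
  refine Filter.mem_of_superset (hVo.mem_nhds hxV) ?_
  intro y hyV
  rw [Set.mem_compl_iff, Set.mem_setOf_eq, accPt_iff_nhds]
  push_neg
  by_cases hyx : y = x
  · subst hyx
    exact ⟨U, hU, hUK⟩
  · refine ⟨V \ {x}, ?_, ?_⟩
    · exact (hVo.sdiff isClosed_singleton).mem_nhds ⟨hyV, hyx⟩
    · intro z hz
      exact absurd (hUK z ⟨hVU hz.1.1, hz.2⟩) hz.1.2

private lemma step (χ₀ : characterSpace ℂ A) {K : Set (characterSpace ℂ A)}
    (hKc : IsCompact K) (h0 : χ₀ ∉ K)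
    (hG : Good χ₀ {x ∈ K | AccPt x (Filter.principal K)}) : Good χ₀ K := by
  obtain ⟨b, hb1, hb2⟩ := hG
  set T : Set (characterSpace ℂ A) := {χ ∈ K | 3/4 ≤ ‖χ b‖} with hTdef
  have hTK : T ⊆ K := fun χ hχ => hχ.1
  have hTc : IsCompact T := by
    have : IsClosed {χ : characterSpace ℂ A | 3/4 ≤ ‖χ b‖} :=
      isClosed_le continuous_const (char_eval_continuous b).norm
    exact hKc.inter_right this
  -- every point of `T` is isolated in `K`, hence `T` is finite
  have hiso : ∀ x : T, ∃ U : Set (characterSpace ℂ A),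
      IsOpen U ∧ (x : characterSpace ℂ A) ∈ U ∧ ∀ y ∈ U ∩ K, y = (x : characterSpace ℂ A) := by
    rintro ⟨x, hxK, hxb⟩
    have hnacc : ¬ AccPt x (Filter.principal K) := by
      intro h
      have := hb2 x ⟨hxK, h⟩
      linarith
    rw [accPt_iff_nhds] at hnacc; push_neg at hnacc
    obtain ⟨U, hU, hUy⟩ := hnacc
    obtain ⟨V, hVU, hVo, hxV⟩ := mem_nhds_iff.mp hU
    exact ⟨V, hVo, hxV, fun y hy => hUy y ⟨hVU hy.1, hy.2⟩⟩
  choose U hUo hxU hUK using hiso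
  have hTfin : T.Finite := by
    obtain ⟨t, ht⟩ := hTc.elim_finite_subcover U hUo
      (fun x hx => Set.mem_iUnion.mpr ⟨⟨x, hx⟩, hxU _⟩)
    have himg : ((fun i : ↥T => (i : characterSpace ℂ A)) '' ↑t).Finite :=
      Set.Finite.image _ t.finite_toSet
    refine himg.subset ?_
    intro y hy
    obtain ⟨i, hit, hyU⟩ := Set.mem_iUnion₂.mp (ht hy)
    exact ⟨i, hit, (hUK i y ⟨hyU, hTK hy⟩).symm⟩
  have hχ₀T : χ₀ ∉ hTfin.toFinset := by
    rw [Set.Finite.mem_toFinset]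
    exact fun h => h0 (hTK h)
  obtain ⟨c, hc1, hc0⟩ := interp χ₀ hTfin.toFinset hχ₀T
  set M : ℝ := ‖c‖ * ‖(1 : A)‖ with hMdef
  have hM0 : 0 ≤ M := mul_nonneg (norm_nonneg _) (norm_nonneg _)
  obtain ⟨N, hN⟩ : ∃ N : ℕ, (3/4 : ℝ)^N * (M+1) ≤ 1/2 := by
    obtain ⟨N, hN⟩ := exists_pow_lt_of_lt_one
      (show (0:ℝ) < (1/2)/(M+1) by positivity) (by norm_num : (3/4:ℝ) < 1)
    refine ⟨N, ?_⟩
    exact ((lt_div_iff₀ (by positivity)).mp hN).le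
  refine ⟨b^N * c, by rw [map_mul, map_pow, hb1, one_pow, hc1, one_mul], ?_⟩
  intro χ hχ
  by_cases hmem : χ ∈ T
  · have hz : χ c = 0 := hc0 χ (hTfin.mem_toFinset.mpr hmem)
    rw [map_mul, hz, mul_zero, norm_zero]
    norm_num
  · have hlt : ‖χ b‖ < 3/4 := by
      by_contra h
      exact hmem ⟨hχ, not_lt.mp h⟩
    have hc' : ‖χ c‖ ≤ M := char_norm_apply_le χ c
    rw [map_mul, map_pow, norm_mul, norm_pow]
    calc ‖χ b‖^N * ‖χ c‖ ≤ (3/4)^N * (M+1) := by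
          apply mul_le_mul (pow_le_pow_left₀ (norm_nonneg _) hlt.le N)
            (hc'.trans (by linarith)) (norm_nonneg _) (by positivity)
      _ ≤ 1/2 := hN

private lemma key (E : Set (characterSpace ℂ A))
    (hE : ∀ P ⊆ E, Perfect P → P = ∅)
    (χ₀ : characterSpace ℂ A) (K : Set (characterSpace ℂ A))
    (hK : IsClosed K) (hKE : K ⊆ E) (h0 : χ₀ ∉ K) : Good χ₀ K := by
  by_contra hbad
  set Bad : Set (Set (characterSpace ℂ A)) :=
    {S | IsClosed S ∧ S ⊆ E ∧ χ₀ ∉ S ∧ ¬ Good χ₀ S} with hBadDef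
  have hzorn := zorn_superset_nonempty Bad ?_ K ⟨hK, hKE, h0, hbad⟩
  · obtain ⟨m, hmK, hmin⟩ := hzorn
    obtain ⟨hmcl, hmE, hm0, hmng⟩ := hmin.1
    have hmne : m.Nonempty := by
      rcases Set.eq_empty_or_nonempty m with h | h
      · exact absurd ⟨1, map_one χ₀, by simp [h]⟩ hmng
      · exact h
    set m' : Set (characterSpace ℂ A) := {x ∈ m | AccPt x (Filter.principal m)} with hm'def
    have hm'cl : IsClosed m' := hmcl.inter (isClosed_acc m)
    have hm'sub : m' ⊆ m := fun x hx => hx.1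
    have hm'bad : m' ∈ Bad :=
      ⟨hm'cl, hm'sub.trans hmE, fun h => hm0 (hm'sub h),
        fun hG => hmng (step χ₀ hmcl.isCompact hm0 hG)⟩
    have hmm' : m ⊆ m' := hmin.2 hm'bad hm'sub
    have hperfm : Perfect m := ⟨hmcl, fun x hx => (hmm' hx).2⟩
    exact hmne.ne_empty (hE m hmE hperfm)
  · rintro c hcBad hchain ⟨K₀, hK₀⟩
    haveI : Nonempty ↥c := ⟨⟨K₀, hK₀⟩⟩
    refine ⟨⋂₀ c, ⟨isClosed_sInter (fun S hS => (hcBad hS).1),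
      (Set.sInter_subset_of_mem hK₀).trans (hcBad hK₀).2.1,
      fun h => (hcBad hK₀).2.2.1 (Set.mem_sInter.mp h K₀ hK₀), ?_⟩,
      fun s hs => Set.sInter_subset_of_mem hs⟩
    rintro ⟨b, hb1, hb2⟩
    set C : Set (characterSpace ℂ A) := {χ | 3/4 ≤ ‖χ b‖} with hCdef
    have hCcl : IsClosed C := isClosed_le continuous_const (char_eval_continuous b).norm
    by_cases hne : ∀ S ∈ c, (S ∩ C).Nonempty
    · have hdir : Directed (· ⊇ ·) (fun S : ↥c => (S : Set (characterSpace ℂ A)) ∩ C) := by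
        rintro ⟨S, hS⟩ ⟨S', hS'⟩
        rcases hchain.total hS hS' with h | h
        · exact ⟨⟨S, hS⟩, Set.inter_subset_inter_left C (le_refl S),
            Set.inter_subset_inter_left C h⟩
        · exact ⟨⟨S', hS'⟩, Set.inter_subset_inter_left C h,
            Set.inter_subset_inter_left C (le_refl S')⟩
      obtain ⟨χ, hχ⟩ := IsCompact.nonempty_iInter_of_directed_nonempty_isCompact_isClosed
        (fun S : ↥c => (S : Set (characterSpace ℂ A)) ∩ C) hdir
        (fun S => hne S S.2)
        (fun S => ((hcBad S.2).1.isCompact).inter_right hCcl)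
        (fun S => ((hcBad S.2).1.inter hCcl))
      have hχ0 : χ ∈ ⋂₀ c :=
        Set.mem_sInter.mpr fun S hS => (Set.mem_iInter.mp hχ ⟨S, hS⟩).1
      have h34 : (3/4:ℝ) ≤ ‖χ b‖ := (Set.mem_iInter.mp hχ ⟨K₀, hK₀⟩).2
      linarith [hb2 χ hχ0]
    · push_neg at hne
      obtain ⟨S, hSc, hSE⟩ := hne
      apply (hcBad hSc).2.2.2
      refine ⟨b^3, by rw [map_pow, hb1, one_pow], fun χ hχ => ?_⟩
      have hlt : ‖χ b‖ < 3/4 := by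
        by_contra h
        have hmem : χ ∈ S ∩ C := ⟨hχ, not_lt.mp h⟩
        rw [hSE] at hmem
        exact hmem
      rw [map_pow, norm_pow]
      calc ‖χ b‖^3 ≤ (3/4:ℝ)^3 := pow_le_pow_left₀ (norm_nonneg _) hlt.le 3
        _ ≤ 1/2 := by norm_num

end Aux

/-- If `A` is a commutative unital complex Banach algebra, `(φ n)` a sequence of pairwise
distinct characters on `A` whose closure in the character space has no (nonempty) perfect
subsets, and `(l n)` is absolutely summable with `∑' n, l n * φ n a = 0` for all `a`, then
all `l n` vanish. -/
theorem countable_lin_comb_characters_eq_zero_of_no_perfect_subsets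
    {A : Type*} [NormedCommRing A] [NormedAlgebra ℂ A] [CompleteSpace A]
    (φ : ℕ → characterSpace ℂ A) (hφ : Function.Injective φ)
    (hperf : ∀ P : Set (characterSpace ℂ A), P ⊆ closure (Set.range φ) → Perfect P → P = ∅)
    (l : ℕ → ℂ) (hl : Summable fun n => ‖l n‖)
    (hzero : ∀ a : A, ∑' n, l n * φ n a = 0) :
    ∀ n, l n = 0 := by
  intro n₀
  by_contra hn₀
  set D₀ : Set (characterSpace ℂ A) := φ '' {n | l n ≠ 0} with hD₀def
  set F : Set (characterSpace ℂ A) := closure D₀ with hFdef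
  have hFE : F ⊆ closure (Set.range φ) := closure_mono (Set.image_subset_range _ _)
  have hnotpre : ¬ Preperfect F := by
    intro h
    have hFempty := hperf F hFE ⟨isClosed_closure, h⟩
    have : φ n₀ ∈ F := subset_closure (Set.mem_image_of_mem φ hn₀)
    rw [hFempty] at this
    exact this
  unfold Preperfect at hnotpre
  push_neg at hnotpre
  obtain ⟨x, hxF, hxacc⟩ := hnotpre
  rw [accPt_iff_nhds] at hxacc; push_neg at hxacc
  obtain ⟨U, hU, hUx⟩ := hxacc
  obtain ⟨V, hVU, hVo, hxV⟩ := mem_nhds_iff.mp hU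
  obtain ⟨y, hyV, hyD⟩ := mem_closure_iff.mp hxF V hVo hxV
  obtain ⟨m, hm, rfl⟩ := hyD
  have hyx : φ m = x := hUx (φ m) ⟨hVU hyV, subset_closure ⟨m, hm, rfl⟩⟩
  -- the compact set of other support characters
  have hKcl : IsClosed (F \ V) := by
    rw [Set.diff_eq]
    exact isClosed_closure.inter hVo.isClosed_compl
  have hKE : F \ V ⊆ closure (Set.range φ) := fun z hz => hFE hz.1
  have h0K : φ m ∉ F \ V := fun h => h.2 (hyx ▸ hxV)
  obtain ⟨b, hb1, hb2⟩ := key (closure (Set.range φ)) hperf (φ m) (F \ V) hKcl hKE h0K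
  have hmemK : ∀ n, l n ≠ 0 → n ≠ m → φ n ∈ F \ V := by
    intro n hn hnm
    refine ⟨subset_closure ⟨n, hn, rfl⟩, fun hnV => ?_⟩
    have : φ n = x := hUx (φ n) ⟨hVU hnV, subset_closure ⟨n, hn, rfl⟩⟩
    exact hnm (hφ (this.trans hyx.symm))
  -- now kill `l m`
  set Cs : ℝ := ∑' n, ‖l n‖ with hCsdef
  have hkill : ∀ N : ℕ, ‖l m‖ ≤ Cs * (1/2)^N := by
    intro N
    have hsum0 := hzero (b^N)
    simp only [map_pow] at hsum0
    have hsummable : Summable fun n => l n * (φ n b)^N := by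
      apply Summable.of_norm_bounded (g := fun n => ‖l n‖ * (‖b‖ * ‖(1:A)‖)^N) (hl.mul_right _)
      intro n
      rw [norm_mul, norm_pow]
      exact mul_le_mul_of_nonneg_left
        (pow_le_pow_left₀ (norm_nonneg _) (char_norm_apply_le (φ n) b) N) (norm_nonneg _)
    have hsplit := Summable.tsum_eq_add_tsum_ite hsummable m
    rw [hsum0, hb1, one_pow, mul_one] at hsplit
    have hlm : l m = - ∑' n, ite (n = m) 0 (l n * (φ n b)^N) :=
      eq_neg_of_add_eq_zero_left hsplit.symm
    rw [hlm, norm_neg]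
    have hb' : ∀ n, ‖ite (n = m) (0:ℂ) (l n * (φ n b)^N)‖ ≤ ‖l n‖ * (1/2)^N := by
      intro n
      by_cases h : n = m
      · subst h
        rw [if_pos rfl, norm_zero]
        positivity
      · rw [if_neg h, norm_mul, norm_pow]
        by_cases h' : l n = 0
        · simp [h']
        · refine mul_le_mul_of_nonneg_left ?_ (norm_nonneg _)
          exact pow_le_pow_left₀ (norm_nonneg _) (hb2 (φ n) (hmemK n h' h)) N
    exact tsum_of_norm_bounded (hl.hasSum.mul_right _) hb'
  have hCpos : (0:ℝ) < Cs :=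
    lt_of_lt_of_le (norm_pos_iff.mpr hm) (Summable.le_tsum hl m (fun _ _ => norm_nonneg _))
  obtain ⟨N, hN⟩ := exists_pow_lt_of_lt_one
    (div_pos (norm_pos_iff.mpr hm) hCpos) (by norm_num : (1/2:ℝ) < 1)
  have : Cs * (1/2:ℝ)^N < ‖l m‖ := by
    rw [lt_div_iff₀ hCpos] at hN
    linarith [hN]
  exact absurd (hkill N) (not_le.mpr this)
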